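/- Let f : ℝ^n → ℝ be differentiable and bounded below, attaining its minimum value f* at a point x*. Assume f has β-Lipschitz gradient in the sense that f(y) ≤ f(x) + ⟪∇f(x), y − x⟫ + (β/2)‖y − x‖² for all x, y, and that f satisfies the Polyak–Łojasiewicz condition (1/2)‖∇f(x)‖² ≥ μ·(f(x) − f*) for all x, with μ > 0. Let α > 0 satisfy β < 2α and μ < αβ/(2α − β), and set ρ_∞ := 1 − μ(2α − β)/(αβ), so that ρ_∞ ∈ (0,1). Suppose the sequence (x_k) in ℝ^n satisfies x_{k+1} = x_k − η_k · H_k⁻¹ ∇f(x_k), where each H_k is a diagonal matrix with diagonal entries in [α, β] and the scalar step sizes satisfy η_k ∈ (0, 1] with ∑_{k} (1 − η_k) < ∞. Then there exists a constant C > 0 such that f(x_k) − f* ≤ C · ρ_∞^k for all k; i.e., f(x_k) converges to f* at a linear (geometric) rate ρ_∞. -/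

import Mathlib

open RealInnerProductSpace


set_option maxHeartbeats 800000

private lemma ocp_aux_coef (α β ηk Dk : ℝ) (hα : 0 < α) (hβ : 0 < β)
    (hβα : β < 2 * α) (hD1 : α ≤ Dk) (hD2 : Dk ≤ β)
    (hη0 : 0 < ηk) (hη1 : ηk ≤ 1) :
    ηk * ((2 * α - β) / (2 * (α * β))) ≤ ηk * Dk⁻¹ - β / 2 * ηk ^ 2 * (Dk⁻¹) ^ 2 := by
  have hDpos : 0 < Dk := lt_of_lt_of_le hα hD1
  set t : ℝ := Dk⁻¹ with ht
  have htpos : 0 < t := inv_pos.2 hDpos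
  have hat : α * t ≤ 1 := by
    rw [ht, ← mul_inv_cancel₀ hDpos.ne']
    exact mul_le_mul_of_nonneg_right hD1 htpos.le
  have hbt : 1 ≤ β * t := by
    rw [ht, ← mul_inv_cancel₀ hDpos.ne']
    exact mul_le_mul_of_nonneg_right hD2 htpos.le
  have hαβ' : α ≤ β := le_trans hD1 hD2
  have h2bt : β * t ≤ 2 := by nlinarith
  have h1 : (2 * α - β) / (2 * (α * β)) ≤ t - β / 2 * t ^ 2 := by
    rw [div_le_iff₀ (by positivity : (0:ℝ) < 2 * (α * β))]
    nlinarith [mul_nonneg (mul_nonneg hβ.le (by linarith : (0:ℝ) ≤ 1 - α * t))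
        (by linarith : (0:ℝ) ≤ β * t - 1),
      mul_nonneg (by linarith : (0:ℝ) ≤ β - α) (by linarith : (0:ℝ) ≤ 2 - β * t)]
  nlinarith [mul_le_mul_of_nonneg_left h1 hη0.le,
    mul_nonneg (by nlinarith : (0:ℝ) ≤ ηk - ηk ^ 2)
      (mul_nonneg (by positivity : (0:ℝ) ≤ β / 2) (sq_nonneg t))]

private lemma ocp_aux_comb (μ m E F A G : ℝ) (hm : 0 ≤ m) (hE : 0 ≤ E)
    (h1 : F ≤ E - A) (h2 : m * G ≤ A) (h3 : μ * E ≤ 1 / 2 * G) :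
    F ≤ (1 - 2 * μ * m) * E := by
  nlinarith [mul_le_mul_of_nonneg_left h3 hm]

/-- Convergence theorem for the OCP-LS optimizer: under β-smoothness, the
Polyak–Łojasiewicz condition with constant μ > 0, the parameter relations
β < 2α and μ < αβ/(2α − β), a diagonally preconditioned gradient iteration
`x_{k+1} = x_k − η_k • H_k⁻¹ ∇f(x_k)` with diagonal entries of `H_k` in `[α, β]`
and step sizes `η_k ∈ (0,1]` with `∑ (1 − η_k) < ∞` converges at the linear
rate `ρ_∞ = 1 − μ(2α − β)/(αβ)`. -/
theorem ocp_ls_linear_convergence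
    (n : ℕ) (f : EuclideanSpace ℝ (Fin n) → ℝ)
    (hdiff : Differentiable ℝ f)
    (fstar : ℝ) (xstar : EuclideanSpace ℝ (Fin n))
    (hmin : f xstar = fstar) (hbdd : ∀ x, fstar ≤ f x)
    (α β μ : ℝ) (hα : 0 < α) (hβ : 0 < β) (hμ : 0 < μ)
    (hsmooth : ∀ x y : EuclideanSpace ℝ (Fin n),
      f y ≤ f x + ⟪gradient f x, y - x⟫ + β / 2 * ‖y - x‖ ^ 2)
    (hPL : ∀ x : EuclideanSpace ℝ (Fin n),
      μ * (f x - fstar) ≤ 1 / 2 * ‖gradient f x‖ ^ 2)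
    (hβα : β < 2 * α) (hμle : μ < α * β / (2 * α - β))
    (ρ : ℝ) (hρ : ρ = 1 - μ * (2 * α - β) / (α * β))
    (x : ℕ → EuclideanSpace ℝ (Fin n))
    (D : ℕ → Fin n → ℝ) (η : ℕ → ℝ)
    (hD : ∀ k i, D k i ∈ Set.Icc α β)
    (hη : ∀ k, η k ∈ Set.Ioc (0 : ℝ) 1)
    (hsum : Summable (fun k => 1 - η k))
    (hupd : ∀ k, x (k + 1) = x k - η k •
      (WithLp.equiv 2 (Fin n → ℝ)).symm
        (((Matrix.diagonal (D k))⁻¹).mulVec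
          ((WithLp.equiv 2 (Fin n → ℝ)) (gradient f (x k))))) :
    ∃ C > 0, ∀ k, f (x k) - fstar ≤ C * ρ ^ k := by
  have h2αβ : 0 < 2 * α - β := by linarith
  have hαβ : 0 < α * β := mul_pos hα hβ
  have hρpos : 0 < ρ := by
    rw [hρ]
    rw [lt_div_iff₀ h2αβ] at hμle
    rw [sub_pos, div_lt_one hαβ]
    linarith
  have hρlt : ρ < 1 := by
    rw [hρ]
    have : 0 < μ * (2 * α - β) / (α * β) := by positivity
    linarith
  set c₀ : ℝ := (2 * α - β) / (2 * (α * β)) with hc₀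
  have hc₀pos : 0 < c₀ := by positivity
  have h1ρ : 1 - ρ = 2 * μ * c₀ := by
    rw [hρ, hc₀]; field_simp; ring
  have hs_nn : ∀ k, 0 ≤ 1 - η k := fun k => by linarith [(hη k).2]
  have hE : ∀ k, 0 ≤ f (x k) - fstar := fun k => by linarith [hbdd (x k)]
  -- key per-step inequality
  have key : ∀ k, f (x (k+1)) - fstar ≤ (1 - 2 * μ * (η k * c₀)) * (f (x k) - fstar) := by
    intro k
    obtain ⟨hη0, hη1⟩ := hη k
    set g := gradient f (x k) with hg
    have hDpos : ∀ i, 0 < D k i := fun i => lt_of_lt_of_le hα (hD k i).1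
    have hMinv : (Matrix.diagonal (D k))⁻¹ = Matrix.diagonal (fun i => (D k i)⁻¹) := by
      apply Matrix.inv_eq_right_inv
      rw [Matrix.diagonal_mul_diagonal]
      have : (fun i => D k i * (D k i)⁻¹) = fun _ => (1 : ℝ) := by
        funext i; exact mul_inv_cancel₀ (hDpos i).ne'
      rw [this, Matrix.diagonal_one]
    have hd : ∀ i, (x (k+1) - x k) i = -(η k * ((D k i)⁻¹ * g i)) := by
      intro i
      rw [hupd k, hMinv]
      simp [Matrix.mulVec_diagonal, hg]
    have hinner : ⟪g, x (k+1) - x k⟫ = ∑ i, g i * (-(η k * ((D k i)⁻¹ * g i))) := by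
      rw [PiLp.inner_apply]
      exact Finset.sum_congr rfl fun i _ => by rw [hd i]; simp [RCLike.inner_apply]; ring
    have hnorm : ‖x (k+1) - x k‖ ^ 2
        = ∑ i, (-(η k * ((D k i)⁻¹ * g i))) * (-(η k * ((D k i)⁻¹ * g i))) := by
      rw [← real_inner_self_eq_norm_sq, PiLp.inner_apply]
      exact Finset.sum_congr rfl fun i _ => by
        rw [hd i]; simp [RCLike.inner_apply]; rw [← abs_inv, ← abs_mul, ← abs_mul, sq_abs]; ring
    have hnormg : ‖g‖ ^ 2 = ∑ i, g i * g i := by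
      rw [← real_inner_self_eq_norm_sq, PiLp.inner_apply]
      exact Finset.sum_congr rfl fun i _ => by simp [RCLike.inner_apply]; ring
    have hsm := hsmooth (x k) (x (k+1))
    rw [hinner, hnorm] at hsm
    have hsm2 : f (x (k+1)) ≤ f (x k)
        - ∑ i, (η k * (D k i)⁻¹ - β / 2 * (η k)^2 * ((D k i)⁻¹)^2) * (g i)^2 := by
      have hcomb : (∑ i, g i * (-(η k * ((D k i)⁻¹ * g i))))
          + β / 2 * ∑ i, (-(η k * ((D k i)⁻¹ * g i))) * (-(η k * ((D k i)⁻¹ * g i)))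
          = - ∑ i, (η k * (D k i)⁻¹ - β / 2 * (η k)^2 * ((D k i)⁻¹)^2) * (g i)^2 := by
        rw [Finset.mul_sum, ← Finset.sum_add_distrib, ← Finset.sum_neg_distrib]
        exact Finset.sum_congr rfl fun i _ => by ring
      linarith [hsm, hcomb.le, hcomb.ge]
    have hA : η k * c₀ * ‖g‖^2
        ≤ ∑ i, (η k * (D k i)⁻¹ - β / 2 * (η k)^2 * ((D k i)⁻¹)^2) * (g i)^2 := by
      rw [hnormg, Finset.mul_sum]
      apply Finset.sum_le_sum
      intro i _
      have h2 : g i * g i = (g i)^2 := by ring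
      rw [h2]
      exact mul_le_mul_of_nonneg_right
        (ocp_aux_coef α β (η k) (D k i) hα hβ hβα (hD k i).1 (hD k i).2 hη0 hη1)
        (sq_nonneg _)
    exact ocp_aux_comb μ (η k * c₀) (f (x k) - fstar) (f (x (k+1)) - fstar)
      (∑ i, (η k * (D k i)⁻¹ - β / 2 * (η k)^2 * ((D k i)⁻¹)^2) * (g i)^2)
      (‖g‖^2) (by positivity) (hE k) (by linarith [hsm2]) hA (hPL (x k))
  -- induction
  set c : ℝ := (1 - ρ) / ρ with hc
  have hcnn : 0 ≤ c := by
    rw [hc]; apply div_nonneg (by linarith) hρpos.le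
  have hρc : ρ * c = 1 - ρ := by
    rw [hc]; field_simp
  have main : ∀ k, f (x k) - fstar
      ≤ (f (x 0) - fstar) * (ρ ^ k * Real.exp (c * ∑ j ∈ Finset.range k, (1 - η j))) := by
    intro k
    induction k with
    | zero => simp
    | succ k ih =>
      have hcoefk : (1 - 2 * μ * (η k * c₀)) ≤ ρ * (1 + c * (1 - η k)) := by
        have heq : ρ * (1 + c * (1 - η k)) = ρ + (1 - ρ) * (1 - η k) := by
          rw [← hρc]; ring
        rw [heq]
        have : (1:ℝ) - 2 * μ * (η k * c₀) = ρ + (1 - ρ) * (1 - η k) := by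
          linear_combination (η k) * h1ρ
        linarith [this]
      have h2 : f (x (k+1)) - fstar ≤ (ρ * (1 + c * (1 - η k))) * (f (x k) - fstar) :=
        le_trans (key k) (mul_le_mul_of_nonneg_right hcoefk (hE k))
      have hfac : ρ * (1 + c * (1 - η k)) ≤ ρ * Real.exp (c * (1 - η k)) := by
        apply mul_le_mul_of_nonneg_left _ hρpos.le
        linarith [Real.add_one_le_exp (c * (1 - η k))]
      have hfacnn : 0 ≤ ρ * (1 + c * (1 - η k)) := by
        apply mul_nonneg hρpos.le
        nlinarith [mul_nonneg hcnn (hs_nn k)]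
      have hprod_nn : 0 ≤ (f (x 0) - fstar) * (ρ ^ k * Real.exp (c * ∑ j ∈ Finset.range k, (1 - η j))) :=
        mul_nonneg (hE 0) (mul_nonneg (pow_nonneg hρpos.le k) (Real.exp_pos _).le)
      calc f (x (k+1)) - fstar
          ≤ (ρ * (1 + c * (1 - η k))) * (f (x k) - fstar) := h2
        _ ≤ (ρ * (1 + c * (1 - η k))) *
              ((f (x 0) - fstar) * (ρ ^ k * Real.exp (c * ∑ j ∈ Finset.range k, (1 - η j)))) :=
            mul_le_mul_of_nonneg_left ih hfacnn
        _ ≤ (ρ * Real.exp (c * (1 - η k))) *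
              ((f (x 0) - fstar) * (ρ ^ k * Real.exp (c * ∑ j ∈ Finset.range k, (1 - η j)))) :=
            mul_le_mul_of_nonneg_right hfac hprod_nn
        _ = (f (x 0) - fstar) * (ρ ^ (k+1) * Real.exp (c * ∑ j ∈ Finset.range (k+1), (1 - η j))) := by
            rw [Finset.sum_range_succ, mul_add, Real.exp_add]
            ring
  set S : ℝ := ∑' k, (1 - η k) with hS
  have hC0 : (0:ℝ) < f (x 0) - fstar + 1 := by linarith [hE 0]
  refine ⟨(f (x 0) - fstar + 1) * Real.exp (c * S),
    mul_pos hC0 (Real.exp_pos _), ?_⟩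
  intro k
  have hpart : ∑ j ∈ Finset.range k, (1 - η j) ≤ S :=
    Summable.sum_le_tsum (Finset.range k) (fun i _ => hs_nn i) hsum
  have hexp : Real.exp (c * ∑ j ∈ Finset.range k, (1 - η j)) ≤ Real.exp (c * S) :=
    Real.exp_le_exp.2 (mul_le_mul_of_nonneg_left hpart hcnn)
  calc f (x k) - fstar
      ≤ (f (x 0) - fstar) * (ρ ^ k * Real.exp (c * ∑ j ∈ Finset.range k, (1 - η j))) := main k
    _ ≤ (f (x 0) - fstar + 1) * (ρ ^ k * Real.exp (c * S)) := by
        apply mul_le_mul (by linarith)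
          (mul_le_mul_of_nonneg_left hexp (pow_nonneg hρpos.le k))
          (mul_nonneg (pow_nonneg hρpos.le k) (Real.exp_pos _).le)
          (by linarith)
    _ = (f (x 0) - fstar + 1) * Real.exp (c * S) * ρ ^ k := by ring
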